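/- Let l be a prime and let f : H → H' be a morphism of ℤₗ-modules. Assume: (1) ker f is torsion-free; (2) H is a finitely generated ℤₗ-module; (3) there are natural numbers a, b, m with a + b < m such that the kernel of the induced map H/l^m H → H'/l^m H' is annihilated by l^a; and (4) the torsion submodule of H' is annihilated by l^b. Then f is injective. -/

import Mathlib

/-- Sublemma (Section 3.3): a ℤₗ-linear map with torsion-free kernel, finitely
generated source, kernel of the mod-l^m reduction annihilated by l^a, and
torsion of the target annihilated by l^b (with a + b < m) is injective. -/
theorem sublemma_injective (l : ℕ) [Fact l.Prime]
    (H H' : Type*) [AddCommGroup H] [Module ℤ_[l] H]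
    [AddCommGroup H'] [Module ℤ_[l] H']
    (f : H →ₗ[ℤ_[l]] H')
    (hker_tf : ∀ (c : ℤ_[l]) (x : H), f x = 0 → c ≠ 0 → c • x = 0 → x = 0)
    [Module.Finite ℤ_[l] H]
    (a b m : ℕ) (habm : a + b < m)
    (hmodker : ∀ x : H, (∃ y : H', f x = ((l : ℤ_[l]) ^ m) • y) →
      ∃ z : H, ((l : ℤ_[l]) ^ a) • x = ((l : ℤ_[l]) ^ m) • z)
    (htors : ∀ y : H', (∃ c : ℤ_[l], c ≠ 0 ∧ c • y = 0) → ((l : ℤ_[l]) ^ b) • y = 0) :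
    Function.Injective f := by
  set π : ℤ_[l] := (l : ℤ_[l]) with hπdef
  have hπ : π ≠ 0 := by
    simp only [hπdef]
    exact Nat.cast_ne_zero.mpr (Fact.out (p := l.Prime)).ne_zero
  -- Step 1: uniform bound on the torsion of H
  have htorH : ∃ t : ℕ, ∀ h : H, h ∈ Submodule.torsion ℤ_[l] H → π ^ t • h = 0 := by
    have hN : IsNoetherian ℤ_[l] H := isNoetherian_of_isNoetherianRing_of_finite ℤ_[l] H
    obtain ⟨s, hs⟩ := IsNoetherian.noetherian (Submodule.torsion ℤ_[l] H)
    have hgen : ∀ g : H, g ∈ s → ∃ v : ℕ, π ^ v • g = 0 := by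
      intro g hg
      have hgt : g ∈ Submodule.torsion ℤ_[l] H := by
        rw [← hs]; exact Submodule.subset_span hg
      obtain ⟨c, hc⟩ := hgt
      have hc0 : (c : ℤ_[l]) ≠ 0 := nonZeroDivisors.coe_ne_zero c
      refine ⟨PadicInt.valuation (c : ℤ_[l]), ?_⟩
      have hspec := PadicInt.unitCoeff_spec hc0
      have : (c : ℤ_[l]) • g = 0 := hc
      rw [hspec, mul_smul] at this
      have := congrArg (fun w => ((PadicInt.unitCoeff hc0)⁻¹ : ℤ_[l]ˣ) • w) this
      simpa [Units.smul_def, smul_smul] using this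
    choose v hv using hgen
    refine ⟨s.attach.sup fun g => v g.1 g.2, ?_⟩
    intro h hh
    set t := s.attach.sup fun g => v g.1 g.2 with ht
    have hker : Submodule.torsion ℤ_[l] H ≤
        LinearMap.ker (LinearMap.lsmul ℤ_[l] H (π ^ t)) := by
      rw [← hs, Submodule.span_le]
      intro g hg
      have hle : v g hg ≤ t := Finset.le_sup (f := fun (g : {x // x ∈ s}) => v g.1 g.2)
        (Finset.mem_attach s ⟨g, hg⟩)
      simp only [SetLike.mem_coe, LinearMap.mem_ker, LinearMap.lsmul_apply]
      rw [← Nat.sub_add_cancel hle, pow_add, mul_smul, hv g hg, smul_zero]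
    simpa using hker hh
  obtain ⟨t, ht⟩ := htorH
  rw [injective_iff_map_eq_zero]
  intro x hx
  -- Step 2: the divisibility chain
  have key : ∀ k : ℕ, ∃ z : H, π ^ (a + k * (a + b)) • x = π ^ ((k + 1) * m) • z := by
    intro k
    induction k with
    | zero =>
      obtain ⟨z, hz⟩ := hmodker x ⟨0, by rw [hx, smul_zero]⟩
      exact ⟨z, by simpa using hz⟩
    | succ k ih =>
      obtain ⟨z, hz⟩ := ih
      have h1 : π ^ ((k + 1) * m) • f z = 0 := by
        have := congrArg f hz
        rw [map_smul, map_smul, hx, smul_zero] at this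
        exact this.symm
      have h2 : π ^ b • f z = 0 :=
        htors _ ⟨π ^ ((k + 1) * m), pow_ne_zero _ hπ, h1⟩
      obtain ⟨w, hw⟩ := hmodker (π ^ b • z) ⟨0, by rw [map_smul, h2, smul_zero]⟩
      refine ⟨w, ?_⟩
      have hw' : π ^ (a + b) • z = π ^ m • w := by rw [pow_add, mul_smul, hw]
      have e1 : a + (k + 1) * (a + b) = (a + b) + (a + k * (a + b)) := by ring
      rw [e1, pow_add, mul_smul, hz, smul_comm, hw', smul_smul, ← pow_add]
      congr 1
      ring
  -- Step 3: Krull intersection (on a universe-0 copy of H)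
  have hsmall : Small.{0} H := by
    obtain ⟨n, g, hg⟩ := Module.Finite.exists_fin' ℤ_[l] H
    exact small_of_surjective hg
  let e : Shrink.{0} H ≃ₗ[ℤ_[l]] H := Shrink.linearEquiv ℤ_[l] H
  have : Module.Finite ℤ_[l] (Shrink.{0} H) := Module.Finite.equiv e.symm
  have hbot : (⨅ i : ℕ, (IsLocalRing.maximalIdeal ℤ_[l]) ^ i • ⊤ :
      Submodule ℤ_[l] (Shrink.{0} H)) = ⊥ :=
    Ideal.iInf_pow_smul_eq_bot_of_isLocalRing (IsLocalRing.maximalIdeal ℤ_[l])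
      (Ideal.IsMaximal.ne_top inferInstance)
  have hmem : e.symm (π ^ t • x) ∈ (⨅ i : ℕ, (IsLocalRing.maximalIdeal ℤ_[l]) ^ i • ⊤ :
      Submodule ℤ_[l] (Shrink.{0} H)) := by
    rw [Submodule.mem_iInf]
    intro i
    obtain ⟨z, hz⟩ := key i
    have hle : a + i * (a + b) + i ≤ (i + 1) * m := by
      calc a + i * (a + b) + i ≤ (i + 1) * (a + b + 1) := by ring_nf; omega
        _ ≤ (i + 1) * m := Nat.mul_le_mul_left _ habm
    set r := (i + 1) * m - (a + i * (a + b)) with hr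
    have hra : a + i * (a + b) + r = (i + 1) * m := by omega
    have hri : i ≤ r := by omega
    have hz' : π ^ (a + i * (a + b)) • (x - π ^ r • z) = 0 := by
      rw [smul_sub, hz, ← hra, pow_add, mul_smul, sub_self]
    have htor : x - π ^ r • z ∈ Submodule.torsion ℤ_[l] H :=
      ⟨⟨π ^ (a + i * (a + b)), mem_nonZeroDivisors_of_ne_zero (pow_ne_zero _ hπ)⟩, hz'⟩
    have heq : π ^ t • x = π ^ r • (π ^ t • z) := by
      have := ht _ htor
      rw [smul_sub, sub_eq_zero] at this
      rw [this, smul_smul, smul_smul, mul_comm]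
    rw [heq, map_smul]
    have hπmem : π ∈ IsLocalRing.maximalIdeal ℤ_[l] := by
      rw [PadicInt.maximalIdeal_eq_span_p]
      exact Ideal.subset_span rfl
    have hpow : π ^ r ∈ (IsLocalRing.maximalIdeal ℤ_[l]) ^ i :=
      Ideal.pow_le_pow_right hri (Ideal.pow_mem_pow hπmem r)
    exact Submodule.smul_mem_smul hpow Submodule.mem_top
  rw [hbot, Submodule.mem_bot] at hmem
  have hx0 : π ^ t • x = 0 := by
    have := congrArg e hmem
    simpa using this
  exact hker_tf (π ^ t) x hx (pow_ne_zero _ hπ) hx0
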